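/- For all real numbers N and n with 2 ≤ N ≤ n, it holds that (N−1)·(log₂(n−1) − log₂(N−1)) − N·(log₂(n) − log₂(N)) ≤ 3. -/

import Mathlib

/-- Potential-function inequality for deletion from a quadtree component:
for `2 ≤ N ≤ n`, `(N−1)(log₂(n−1) − log₂(N−1)) − N(log₂ n − log₂ N) ≤ 3`. -/
theorem delete_potential_inequality (N n : ℝ) (hN : 2 ≤ N) (hNn : N ≤ n) :
    (N - 1) * (Real.logb 2 (n - 1) - Real.logb 2 (N - 1)) -
      N * (Real.logb 2 n - Real.logb 2 N) ≤ 3 := by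
  have hb : (1:ℝ) < 2 := one_lt_two
  have h1 : Real.logb 2 (n - 1) ≤ Real.logb 2 n :=
    Real.logb_le_logb_of_le hb (by linarith) (by linarith)
  have h2 : Real.logb 2 N ≤ Real.logb 2 n :=
    Real.logb_le_logb_of_le hb (by linarith) hNn
  have hN1 : (0:ℝ) < N - 1 := by linarith
  have h3 : Real.logb 2 N - Real.logb 2 (N - 1) = Real.log (N / (N - 1)) / Real.log 2 := by
    rw [Real.log_div (by linarith) (by linarith)]
    simp [Real.logb, sub_div]
  have h4 : Real.log (N / (N - 1)) ≤ 1 / (N - 1) := by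
    have := Real.log_le_sub_one_of_pos (x := N / (N - 1)) (by positivity)
    have : N / (N - 1) - 1 = 1 / (N - 1) := by field_simp; ring
    linarith [Real.log_le_sub_one_of_pos (x := N / (N - 1)) (show (0:ℝ) < N / (N-1) by positivity)]
  have hlog2 : (0.6931471803 : ℝ) < Real.log 2 := Real.log_two_gt_d9
  have key : (N - 1) * (Real.logb 2 N - Real.logb 2 (N - 1)) ≤ 3 := by
    rw [h3]
    have : (N - 1) * (Real.log (N / (N - 1)) / Real.log 2) ≤ (N - 1) * ((1 / (N - 1)) / Real.log 2) := by
      gcongr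
    calc (N - 1) * (Real.log (N / (N - 1)) / Real.log 2) ≤ (N - 1) * ((1 / (N - 1)) / Real.log 2) := this
      _ = 1 / Real.log 2 := by field_simp
      _ ≤ 3 := by rw [div_le_iff₀ (by linarith)]; linarith
  nlinarith [h1, h2, key, hN1]
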